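/- There exist symmetric positive definite real 2×2 matrices P₁, P₂ and vectors β₁, β₂ ∈ ℝ² such that the first coordinate of the inverse-variance-weighted combination (P₁ + P₂)⁻¹(P₁β₁ + P₂β₂) is strictly smaller than both the first coordinate of β₁ and the first coordinate of β₂; that is, the federated coefficient from inverse variance weighting can lie strictly outside the interval spanned by the two individual coefficients. -/

import Mathlib

open Matrix

lemma posdef_aux (a b c : ℝ) (h : ∀ x y : ℝ, ¬(x = 0 ∧ y = 0) → 0 < a*x*x + 2*b*x*y + c*y*y) :
    (!![a, b; b, c] : Matrix (Fin 2) (Fin 2) ℝ).PosDef := by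
  constructor
  · ext i j
    fin_cases i <;> fin_cases j <;> simp [Matrix.conjTranspose, Matrix.vecHead, Matrix.vecTail]
  · intro x hx
    have hx' : ¬(x 0 = 0 ∧ x 1 = 0) := by
      intro ⟨h0, h1⟩
      apply hx
      ext i; fin_cases i <;> simp [h0, h1]
    have := h (x 0) (x 1) hx'
    simp [dotProduct, Matrix.mulVec, Fin.sum_univ_two, Finsupp.sum_fintype]
    ring_nf
    ring_nf at this
    linarith

/-- **IVW can leave the interval spanned by the individual coefficients.** There exist
symmetric positive definite 2×2 precision matrices `P₁, P₂` and coefficient vectors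
`β₁, β₂` such that the first coordinate of `(P₁ + P₂)⁻¹(P₁β₁ + P₂β₂)` is strictly
smaller than the first coordinates of both `β₁` and `β₂`. -/
theorem ivw_coefficient_can_lie_outside_interval :
    ∃ (P₁ P₂ : Matrix (Fin 2) (Fin 2) ℝ) (β₁ β₂ : Fin 2 → ℝ),
      P₁.PosDef ∧ P₂.PosDef ∧
      ((P₁ + P₂)⁻¹ *ᵥ (P₁ *ᵥ β₁ + P₂ *ᵥ β₂)) 0 < β₁ 0 ∧
      ((P₁ + P₂)⁻¹ *ᵥ (P₁ *ᵥ β₁ + P₂ *ᵥ β₂)) 0 < β₂ 0 := by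
  refine ⟨!![1, -1; -1, 2], !![1, 1; 1, 2], ![0, 1], ![0, 0], ?_, ?_, ?_, ?_⟩
  · apply posdef_aux
    intro x y hxy
    rcases not_and_or.mp hxy with h | h <;> nlinarith [sq_nonneg (x - y), sq_nonneg x, sq_nonneg y, mul_self_pos.mpr h]
  · apply posdef_aux
    intro x y hxy
    rcases not_and_or.mp hxy with h | h <;> nlinarith [sq_nonneg (x + y), sq_nonneg x, sq_nonneg y, mul_self_pos.mpr h]
  all_goals {
    have hinv : (!![1, -1; -1, 2] + !![1, 1; 1, 2] : Matrix (Fin 2) (Fin 2) ℝ)⁻¹ =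
        !![1/2, 0; 0, 1/4] := by
      apply Matrix.inv_eq_right_inv
      rw [Matrix.one_fin_two]; norm_num [Matrix.mul_fin_two]
    rw [hinv]
    norm_num [Matrix.mulVec, dotProduct, Fin.sum_univ_two]
  }
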